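/- Let R be a commutative ring, F an R-module with square-zero extension R_F := R ⊕ F, and M an R-module. Then R-module endomorphisms α of M ⊕ (F ⊗_R M) as an R_F-module (where (r,m) acts by (r,m)·(x, y) = (rx, ry + m⊗x)) lifting the identity on the quotient M correspond naturally and bijectively to R-module maps M → F ⊗_R M. In particular, automorphisms of the trivial extension of M to R_F restricting to the identity modulo F are in bijection with Hom_R(M, F ⊗_R M). -/

import Mathlib

/-!
STATEMENT 15: Let `R` be a commutative ring, `F` an `R`-module (defining the square-zero
extension `R_F = R ⊕ F`) and `M` an `R`-module.  Endomorphisms `α` of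
`M ⊕ (F ⊗_R M)` as an `R_F`-module — where `(r, m)` acts by
`(r, m) · (x, y) = (r x, r y + m ⊗ x)` — lifting the identity on the quotient `M`
correspond naturally and bijectively to `R`-linear maps `M → F ⊗_R M`.

`R_F`-linearity of `α` is encoded as: `α` is `R`-linear and commutes with the operators
`θ m : (x, y) ↦ (0, m ⊗ x)` for all `m : F` (these generate the `R_F`-action together
with the `R`-action); lifting the identity means the first component of `α (x, y)` is `x`.
-/

open TensorProduct

variable (R : Type*) [CommRing R]
variable (F M : Type*) [AddCommGroup F] [Module R F] [AddCommGroup M] [Module R M]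

/-- The action operator `θ m : (x, y) ↦ (0, m ⊗ x)` of the square-zero element `m : F`
on `M ⊕ (F ⊗_R M)`. -/
noncomputable def sqZeroAction (m : F) :
    (M × (F ⊗[R] M)) →ₗ[R] (M × (F ⊗[R] M)) :=
  LinearMap.prod 0 ((TensorProduct.mk R F M m).comp (LinearMap.fst R M (F ⊗[R] M)))

theorem endomorphisms_lifting_identity_equiv_homs :
    Nonempty
      ({α : (M × (F ⊗[R] M)) →ₗ[R] (M × (F ⊗[R] M)) //
          (∀ p, (α p).1 = p.1) ∧
          (∀ m : F, α ∘ₗ sqZeroAction R F M m = sqZeroAction R F M m ∘ₗ α)} ≃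
        (M →ₗ[R] (F ⊗[R] M))) := by
  constructor
  refine
    { toFun := fun α => (LinearMap.snd R M (F ⊗[R] M)) ∘ₗ α.1 ∘ₗ LinearMap.inl R M (F ⊗[R] M)
      invFun := fun φ =>
        ⟨LinearMap.prod (LinearMap.fst R M (F ⊗[R] M))
          (LinearMap.snd R M (F ⊗[R] M) + φ ∘ₗ LinearMap.fst R M (F ⊗[R] M)), ?_, ?_⟩
      left_inv := ?_
      right_inv := ?_ }
  · intro p; rfl
  · intro m; ext p <;> simp [sqZeroAction]
  · rintro ⟨α, h1, h2⟩
    have hfix : ∀ t : F ⊗[R] M, α (0, t) = (0, t) := by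
      intro t
      induction t using TensorProduct.induction_on with
      | zero => exact map_zero α
      | tmul m x =>
          have := congrArg (fun f => f (x, 0)) (h2 m)
          simp only [LinearMap.comp_apply, sqZeroAction, LinearMap.prod_apply,
            LinearMap.zero_apply, LinearMap.comp_apply, LinearMap.fst_apply,
            TensorProduct.mk_apply, Function.prod] at this
          rw [this, Prod.ext_iff]
          constructor
          · simp [sqZeroAction]
          · simp [sqZeroAction, h1 (x, 0)]
      | add a b ha hb =>
          have : ((0 : M), a + b) = (0, a) + (0, b) := by simp
          rw [this, map_add, ha, hb]
    apply Subtype.ext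
    apply LinearMap.ext
    intro q
    have hq : q = ((q.1, (0 : F ⊗[R] M)) : M × (F ⊗[R] M)) + (0, q.2) := by simp
    conv_rhs => rw [hq]
    rw [map_add, hfix, Prod.ext_iff]
    constructor
    · simp [h1]
    · simp
      abel
  · intro φ
    ext x <;> simp
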